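/- Let N = 2M+2, let D be the N×N DFT matrix with entries D_{mn} = exp(−2πi(m−1)(n−1)/N), let s_t(i) = 1 and s_r(i) = (−1)^{i−1}·i_ℂ for 1 ≤ i ≤ N. Define V ∈ ℂ^{N×N} columnwise by: column 1 of V equals s_t (the all-ones vector), column m+1 equals (1/√2)·D_{:,m+1} for 1 ≤ m ≤ M, column M+2 equals s_r, and column M+2+m equals (1/√2)·D_{:,m+M+2} for 1 ≤ m ≤ M. Then VᴴV is a diagonal matrix, V is invertible, and Tr[(VᴴV)⁻¹] = (2M+1)/(M+1). -/

import Mathlib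

open Matrix

lemma geom_exp_sum_zero (N : ℕ) (hN : 0 < N) (d : ℤ) (hd : ¬ (N:ℤ) ∣ d) :
    ∑ i : Fin N, Complex.exp (2 * Real.pi * Complex.I * d / N) ^ (i:ℕ) = 0 := by
  set ζ := Complex.exp (2 * Real.pi * Complex.I * d / N) with hζ
  have hNc : (N:ℂ) ≠ 0 := Nat.cast_ne_zero.mpr hN.ne'
  have h2 : (2:ℂ) * Real.pi * Complex.I ≠ 0 := by
    simp [Real.pi_ne_zero, Complex.I_ne_zero]
  have hζ1 : ζ ≠ 1 := by
    intro h
    rw [hζ, Complex.exp_eq_one_iff] at h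
    obtain ⟨n, hn⟩ := h
    apply hd
    have h3 : (d:ℂ)/N * (2*Real.pi*Complex.I) = (n:ℂ) * (2*Real.pi*Complex.I) := by
      rw [← hn]; ring
    have h4 : (d:ℂ)/N = n := mul_right_cancel₀ h2 h3
    rw [div_eq_iff hNc] at h4
    have h5 : d = n * N := by exact_mod_cast h4
    exact ⟨n, by rw [h5]; ring⟩
  have hζN : ζ ^ N = 1 := by
    rw [hζ, ← Complex.exp_nat_mul,
      show (N:ℂ) * (2 * Real.pi * Complex.I * d / N) = d * (2 * Real.pi * Complex.I) by
        field_simp]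
    exact Complex.exp_int_mul_two_pi_mul_I d
  rw [Fin.sum_univ_eq_sum_range, geom_sum_eq hζ1, hζN]
  simp


/-- Let `N = 2M+2`, let `D` be the `N × N` DFT matrix (0-based entries
`D j k = exp(-2πi·jk/N)`), and let `s_t i = 1`, `s_r i = (-1)^i · I`.  Define `V`
columnwise (0-based): column `0` equals `s_t`, column `m+1` equals `(1/√2)` times
column `m+1` of `D` for `0 ≤ m < M`, column `M+1` equals `s_r`, and column `M+2+m`
equals `(1/√2)` times column `M+2+m` of `D`.  Then `VᴴV` is diagonal, `V` is
invertible, and `Tr[(VᴴV)⁻¹] = (2M+1)/(M+1)`. -/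
theorem es_practical_dft_measurement_matrix (M : ℕ) (hM : 1 ≤ M)
    (D V : Matrix (Fin (2 * M + 2)) (Fin (2 * M + 2)) ℂ)
    (hD : ∀ j k : Fin (2 * M + 2),
      D j k = Complex.exp (-2 * Real.pi * Complex.I * (j : ℕ) * (k : ℕ) / (2 * M + 2)))
    (s_t s_r : Fin (2 * M + 2) → ℂ)
    (hst : ∀ i, s_t i = 1)
    (hsr : ∀ i, s_r i = (-1 : ℂ) ^ (i : ℕ) * Complex.I)
    (hV0 : ∀ i, V i ⟨0, by omega⟩ = s_t i)
    (hVt : ∀ (i) (m : Fin M),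
      V i ⟨m.1 + 1, by have := m.isLt; omega⟩ =
        ((1 / Real.sqrt 2 : ℝ) : ℂ) * D i ⟨m.1 + 1, by have := m.isLt; omega⟩)
    (hVr0 : ∀ i, V i ⟨M + 1, by omega⟩ = s_r i)
    (hVrm : ∀ (i) (m : Fin M),
      V i ⟨M + 2 + m.1, by have := m.isLt; omega⟩ =
        ((1 / Real.sqrt 2 : ℝ) : ℂ) * D i ⟨M + 2 + m.1, by have := m.isLt; omega⟩) :
    (Vᴴ * V).IsDiag ∧ IsUnit V ∧
      ((Vᴴ * V)⁻¹).trace = ((2 * M + 1 : ℝ) / (M + 1) : ℂ) := by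
  have hNpos : 0 < 2 * M + 2 := by omega
  have hNc : ((2*M+2 : ℕ):ℂ) ≠ 0 := Nat.cast_ne_zero.mpr hNpos.ne'
  have h2M : (2*(M:ℂ)+2) ≠ 0 := by
    have := hNc; push_cast at this; exact this
  -- conjugate of D entries
  have hconj : ∀ i j : Fin (2*M+2), (starRingEnd ℂ) (D i j) =
      Complex.exp (2 * Real.pi * Complex.I * (i : ℕ) * (j : ℕ) / (2 * M + 2)) := by
    intro i j
    rw [hD, ← Complex.exp_conj]
    congr 1
    simp only [map_div₀, _root_.map_mul, map_neg, map_ofNat, Complex.conj_I,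
      Complex.conj_ofReal, map_natCast, map_add, _root_.map_one]
    ring
  -- pointwise term
  have hterm : ∀ j k i : Fin (2*M+2),
      (starRingEnd ℂ) (D i j) * D i k =
      Complex.exp (2 * Real.pi * Complex.I * (((j:ℕ):ℤ) - ((k:ℕ):ℤ) : ℤ) / ((2*M+2:ℕ):ℂ)) ^ (i:ℕ) := by
    intro j k i
    rw [hconj, hD, ← Complex.exp_nat_mul, ← Complex.exp_add]
    congr 1
    push_cast
    field_simp
    ring
  -- orthogonality of columns of D
  have hortho : ∀ j k : Fin (2*M+2), ∑ i, (starRingEnd ℂ) (D i j) * D i k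
      = if j = k then ((2*M+2:ℕ):ℂ) else 0 := by
    intro j k
    simp_rw [hterm j k]
    by_cases h : j = k
    · subst h
      simp
    · rw [if_neg h]
      apply geom_exp_sum_zero _ hNpos
      intro hdvd
      have habs : |((j:ℕ):ℤ) - ((k:ℕ):ℤ)| < ((2*M+2:ℕ):ℤ) := by
        have := j.isLt; have := k.isLt
        rw [abs_lt]; constructor <;> push_cast <;> omega
      have := Int.eq_zero_of_abs_lt_dvd hdvd habs
      exact h (Fin.ext (by omega))
  -- column scaling
  set r : ℂ := ((1/Real.sqrt 2 : ℝ):ℂ) with hrdef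
  set c : Fin (2*M+2) → ℂ := fun j =>
    if j.val = 0 then 1 else if j.val = M+1 then Complex.I else r with hcdef
  -- D column M+1 is (-1)^i
  have hDM1 : ∀ i : Fin (2*M+2), D i ⟨M+1, by omega⟩ = (-1:ℂ) ^ (i:ℕ) := by
    intro i
    rw [hD]
    have hcast : (((⟨M+1, by omega⟩ : Fin (2*M+2)) : ℕ) : ℂ) = ((M:ℂ) + 1) := by
      push_cast [Fin.val_mk]; ring
    rw [hcast]
    have harg : (-2 * (Real.pi:ℂ) * Complex.I * ((i:ℕ):ℂ) * ((M:ℂ)+1) / (2 * (M:ℂ) + 2))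
        = ((i:ℕ):ℂ) * (-(Real.pi * Complex.I)) := by
      field_simp
    rw [harg, Complex.exp_nat_mul]
    congr 1
    rw [Complex.exp_neg, Complex.exp_pi_mul_I]
    norm_num
  -- V in terms of c and D
  have hVc : ∀ i j, V i j = c j * D i j := by
    intro i j
    rcases Nat.lt_or_ge j.val 1 with h0 | h1
    · have hj : j = ⟨0, by omega⟩ := Fin.ext (by show j.1 = 0; omega)
      rw [hj, hV0, hst]
      have hd0 : D i ⟨0, by omega⟩ = 1 := by
        rw [hD]; simp
      rw [hd0]
      simp only [hcdef]
      norm_num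
    · rcases Nat.lt_or_ge j.val (M+1) with h2 | h3
      · -- 1 ≤ j.val ≤ M
        have hj : j = ⟨(⟨j.val - 1, by omega⟩ : Fin M).val + 1, by simp; omega⟩ :=
          Fin.ext (by show j.1 = j.1 - 1 + 1; omega)
        rw [hj, hVt i ⟨j.val - 1, by omega⟩]
        have hc : c j = r := by
          simp only [hcdef]
          rw [if_neg (by omega), if_neg (by omega)]
        rw [← hj, hc]
      · rcases Nat.lt_or_ge j.val (M+2) with h4 | h5
        · have hj : j = ⟨M+1, by omega⟩ := Fin.ext (by show j.1 = M+1; omega)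
          rw [hj, hVr0, hsr, hDM1]
          have hc : c ⟨M+1, by omega⟩ = Complex.I := by
            simp [hcdef]
          rw [hc]
          ring
        · have hj : j = ⟨M + 2 + (⟨j.val - (M+2), by have := j.isLt; omega⟩ : Fin M).val,
              by have := j.isLt; simp; omega⟩ :=
            Fin.ext (by show j.1 = M + 2 + (j.1 - (M+2)); omega)
          rw [hj, hVrm i ⟨j.val - (M+2), by have := j.isLt; omega⟩]
          have hc : c j = r := by
            simp only [hcdef]
            rw [if_neg (by omega), if_neg (by omega)]
          rw [← hj, hc]
  -- VᴴV is diagonal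
  have hVV : Vᴴ * V = Matrix.diagonal
      (fun j => (starRingEnd ℂ) (c j) * c j * ((2*M+2:ℕ):ℂ)) := by
    ext j k
    simp only [Matrix.mul_apply, Matrix.conjTranspose_apply, Matrix.diagonal_apply]
    simp_rw [hVc, ← starRingEnd_apply]
    have hre : ∀ i, (starRingEnd ℂ) (c j * D i j) * (c k * D i k)
        = ((starRingEnd ℂ) (c j) * c k) * ((starRingEnd ℂ) (D i j) * D i k) := by
      intro i; rw [_root_.map_mul]; try ring
    simp_rw [hre]
    rw [← Finset.mul_sum, hortho]
    split_ifs with h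
    · rw [h]
      try ring
    · rw [mul_zero]
  have hc0 : ∀ j, c j ≠ 0 := by
    intro j
    simp only [hcdef]
    split_ifs
    · exact one_ne_zero
    · exact Complex.I_ne_zero
    · exact Complex.ofReal_ne_zero.mpr (by positivity)
  have hdne : ∀ j, (starRingEnd ℂ) (c j) * c j * ((2*M+2:ℕ):ℂ) ≠ 0 := by
    intro j
    refine mul_ne_zero (mul_ne_zero ?_ (hc0 j)) hNc
    intro h
    apply hc0 j
    have h2 := congrArg (starRingEnd ℂ) h
    simpa using h2
  have hdetV : V.det ≠ 0 := by
    intro h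
    have h1 : (Vᴴ*V).det = Vᴴ.det * V.det := Matrix.det_mul _ _
    rw [hVV, Matrix.det_diagonal, h, mul_zero] at h1
    exact (Finset.prod_ne_zero_iff.mpr fun j _ => hdne j) h1
  refine ⟨hVV ▸ Matrix.isDiag_diagonal _, (Matrix.isUnit_iff_isUnit_det V).mpr
    (isUnit_iff_ne_zero.mpr hdetV), ?_⟩
  have hinv : (Matrix.diagonal (fun j => (starRingEnd ℂ) (c j) * c j * ((2*M+2:ℕ):ℂ)))⁻¹
      = Matrix.diagonal (fun j => ((starRingEnd ℂ) (c j) * c j * ((2*M+2:ℕ):ℂ))⁻¹) := by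
    apply Matrix.inv_eq_right_inv
    rw [Matrix.diagonal_mul_diagonal,
      show (fun i => ((starRingEnd ℂ) (c i) * c i * ((2*M+2:ℕ):ℂ)) *
          ((starRingEnd ℂ) (c i) * c i * ((2*M+2:ℕ):ℂ))⁻¹) = fun _ => (1:ℂ) from
        funext fun i => mul_inv_cancel₀ (hdne i), Matrix.diagonal_one]
  rw [hVV, hinv, Matrix.trace_diagonal]
  have hval : ∀ j : Fin (2*M+2),
      ((starRingEnd ℂ) (c j) * c j * ((2*M+2:ℕ):ℂ))⁻¹
      = 2/((2*M+2:ℕ):ℂ)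
        - (if j = (⟨0, by omega⟩ : Fin (2*M+2)) then ((2*M+2:ℕ):ℂ)⁻¹ else 0)
        - (if j = (⟨M+1, by omega⟩ : Fin (2*M+2)) then ((2*M+2:ℕ):ℂ)⁻¹ else 0) := by
    intro j
    simp only [hcdef]
    by_cases h0 : j.val = 0
    · rw [if_pos h0, if_pos (Fin.ext (show j.1 = 0 from h0)),
        if_neg (by intro h; rw [h] at h0; simp [Fin.val_mk] at h0)]
      rw [_root_.map_one]
      field_simp
      norm_num
    · by_cases h1 : j.val = M+1
      · rw [if_neg h0, if_pos h1, if_neg (by intro h; exact h0 (by rw [h])),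
          if_pos (Fin.ext (show j.1 = M+1 from h1))]
        rw [Complex.conj_I]
        have hI : (-Complex.I) * Complex.I = 1 := by
          rw [neg_mul, Complex.I_mul_I]; norm_num
        rw [hI, one_mul, sub_zero]
        field_simp
        norm_num
      · rw [if_neg h0, if_neg h1,
          if_neg (by intro h; apply h0; rw [h]), if_neg (by intro h; apply h1; rw [h])]
        rw [hrdef, Complex.conj_ofReal, ← Complex.ofReal_mul,
          show (1/Real.sqrt 2) * (1/Real.sqrt 2) = 1/2 by
            rw [div_mul_div_comm, Real.mul_self_sqrt (by norm_num)]; norm_num]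
        rw [sub_zero, sub_zero]
        push_cast
        rw [mul_inv]
        field_simp
  simp_rw [hval]
  rw [Finset.sum_sub_distrib, Finset.sum_sub_distrib, Finset.sum_const,
    Finset.sum_ite_eq' _ _ (fun _ => ((2*M+2:ℕ):ℂ)⁻¹),
    Finset.sum_ite_eq' _ _ (fun _ => ((2*M+2:ℕ):ℂ)⁻¹)]
  simp only [Finset.mem_univ, if_pos, Finset.card_univ, Fintype.card_fin, nsmul_eq_mul]
  have hM1 : ((M:ℂ)+1) ≠ 0 := by
    intro h
    have : ((M+1:ℕ):ℂ) = 0 := by push_cast; linear_combination h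
    exact hNc (by push_cast at this ⊢; linear_combination 2 * this)
  push_cast
  field_simp
  ring
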